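/- Let $L/k$ be a cyclic extension of number fields of prime degree $p$ with Galois group generated by $\sigma$. Let $\operatorname{Am}$ denote the group of ambiguous ideal classes in the $p$-class group of $L$ (classes fixed by $\sigma$) and $\operatorname{Am}_{\mathrm{st}}$ the subgroup of strongly ambiguous classes (classes containing a $\sigma$-invariant ideal). Then there is an exact sequence $1 \to \operatorname{Am}_{\mathrm{st}} \to \operatorname{Am} \xrightarrow{\theta} (E_k \cap N_{L/k} L^{\times})/N_{L/k} E_L \to 1$, where $\theta([\mathfrak{a}]) = N_{L/k}(\alpha) \cdot N_{L/k}E_L$ whenever $\mathfrak{a}^{\sigma - 1} = (\alpha)$. In particular, $\operatorname{Am}/\operatorname{Am}_{\mathrm{st}}$ is an elementary abelian $p$-group. -/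

import Mathlib

open NumberField nonZeroDivisors


private lemma fix_zpow {V : Type*} (π : Equiv.Perm V) {u : V} (hu : π u = u) :
    ∀ (y : ℤ), (π ^ y) u = u := by
  have hn : ∀ n : ℕ, (π ^ n) u = u := by
    intro n; induction n with
    | zero => simp
    | succ n ih => rw [pow_succ, Equiv.Perm.mul_apply, hu, ih]
  intro y
  induction y using Int.rec with
  | ofNat n => simpa using hn n
  | negSucc n =>
      rw [zpow_negSucc]
      calc (π ^ (n + 1))⁻¹ u = (π ^ (n + 1))⁻¹ ((π ^ (n + 1)) u) := by rw [hn]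
        _ = u := Equiv.symm_apply_apply _ _

private lemma sum_block {V : Type*} (T : Equiv.Perm V) (p : ℕ) (f : V → ℤ)
    (hsum : ∀ v, ∑ j ∈ Finset.range p, f ((T ^ j) v) = 0) :
    ∀ (t : ℕ) (w : V), ∑ j ∈ Finset.range (p * t), f ((T ^ j) w) = 0 := by
  intro t
  induction t with
  | zero => simp
  | succ t ih =>
      intro w
      have hmul : p * (t + 1) = p * t + p := by ring
      rw [hmul, Finset.sum_range_add, ih w]
      have : ∀ j, ((T ^ (p * t + j)) w) = (T ^ j) ((T ^ (p * t)) w) := by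
        intro j; rw [add_comm, pow_add, Equiv.Perm.mul_apply]
      simp only [this]
      rw [hsum ((T ^ (p * t)) w)]; ring

lemma exists_partial_sums {V : Type*} (T : Equiv.Perm V) {p : ℕ} (hp : p.Prime)
    (hT : T ^ p = 1) (f : V → ℤ)
    (hsum : ∀ v, ∑ j ∈ Finset.range p, f ((T ^ j) v) = 0) :
    ∃ e : V → ℤ, (∀ v, e (T v) = e v + f v) ∧
      ∀ v, e v ≠ 0 → ∃ j, j < p ∧ f ((T ^ j) v) ≠ 0 := by
  classical
  have hp0 : 0 < p := hp.pos
  have hTp : ∀ v, (T ^ p) v = v := by intro v; rw [hT]; rfl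
  have hmod : ∀ (n : ℕ) (v : V), (T ^ n) v = (T ^ (n % p)) v := by
    intro n v
    conv_lhs => rw [← Nat.mod_add_div n p, pow_add, pow_mul, hT, one_pow, mul_one]
  have hfix : ∀ v, T v = v → f v = 0 := by
    intro v hv
    have hiter : ∀ j : ℕ, (T ^ j) v = v := by
      intro j; induction j with
      | zero => rfl
      | succ j ih => rw [pow_succ, Equiv.Perm.mul_apply, hv, ih]
    have := hsum v
    simp only [hiter] at this
    rw [Finset.sum_const, Finset.card_range, nsmul_eq_mul] at this
    have hpz : (p : ℤ) ≠ 0 := by exact_mod_cast hp0.ne'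
    exact (mul_eq_zero.mp this).resolve_left hpz
  -- the claim : if (T^d) u = u then the sum over range d vanishes
  have claim : ∀ (u : V) (d : ℕ), (T ^ d) u = u → ∑ j ∈ Finset.range d, f ((T ^ j) u) = 0 := by
    intro u d hd
    by_cases hpd : p ∣ d
    · obtain ⟨t, rfl⟩ := hpd
      exact sum_block T p f hsum t u
    · -- then u is a fixed point of T
      have hco : Nat.Coprime p d := (Nat.Prime.coprime_iff_not_dvd hp).mpr hpd
      have hfp : T u = u := by
        have hbez : (1 : ℤ) = (p : ℤ) * Nat.gcdA p d + (d : ℤ) * Nat.gcdB p d := by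
          have := Nat.gcd_eq_gcd_ab p d
          rwa [hco, Nat.cast_one] at this
        have h1 : (T ^ (1 : ℤ)) u = u := by
          rw [hbez, zpow_add, Equiv.Perm.mul_apply]
          rw [zpow_mul, zpow_natCast, hT, one_zpow, Equiv.Perm.one_apply]
          rw [zpow_mul, zpow_natCast]
          exact fix_zpow (T ^ d) hd _
        simpa using h1
      have hfall : ∀ j : ℕ, (T ^ j) u = u := by
        intro j; induction j with
        | zero => rfl
        | succ j ih => rw [pow_succ, Equiv.Perm.mul_apply, hfp, ih]
      simp only [hfall]
      simp [hfix u hfp]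
  -- orbit setoid
  let s : Setoid V := ⟨fun v w => ∃ n : ℕ, (T ^ n) v = w, by
    constructor
    · exact fun v => ⟨0, rfl⟩
    · rintro v w ⟨n, rfl⟩
      refine ⟨p * n - n, ?_⟩
      have hle : n ≤ p * n := Nat.le_mul_of_pos_left n hp0
      rw [← Equiv.Perm.mul_apply, ← pow_add, Nat.sub_add_cancel hle, pow_mul, hT, one_pow]
      rfl
    · rintro u v w ⟨m, rfl⟩ ⟨n, rfl⟩
      exact ⟨n + m, by rw [pow_add, Equiv.Perm.mul_apply]⟩⟩
  let rep : V → V := fun v => (Quotient.mk s v).out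
  have hrep : ∀ v, ∃ n : ℕ, (T ^ n) (rep v) = v := by
    intro v
    exact Quotient.exact ((Quotient.mk s v).out_eq)
  have hrep_eq : ∀ v w, (∃ n : ℕ, (T ^ n) v = w) → rep v = rep w := by
    intro v w h
    have : (Quotient.mk s v) = (Quotient.mk s w) := Quotient.sound h
    simp only [rep, this]
  let idx : V → ℕ := fun v => Nat.find (hrep v)
  have hidx : ∀ v, (T ^ idx v) (rep v) = v := fun v => Nat.find_spec (hrep v)
  let E : V → ℕ → ℤ := fun r n => ∑ j ∈ Finset.range n, f ((T ^ j) r)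
  -- well-definedness of E along equal iterates
  have hE_aux : ∀ (w : V) (m d : ℕ), (T ^ (m + d)) w = (T ^ m) w → E w (m + d) = E w m := by
    intro w m d h
    have hu : (T ^ d) ((T ^ m) w) = (T ^ m) w := by
      rw [← Equiv.Perm.mul_apply, ← pow_add, add_comm]; exact h
    have : E w (m + d) = E w m + ∑ j ∈ Finset.range d, f ((T ^ j) ((T ^ m) w)) := by
      simp only [E, Finset.sum_range_add]
      congr 1
      refine Finset.sum_congr rfl fun j _ => ?_
      rw [← Equiv.Perm.mul_apply, ← pow_add, add_comm]
    rw [this, claim _ _ hu, add_zero]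
  have hE : ∀ (w : V) (m n : ℕ), (T ^ m) w = (T ^ n) w → E w m = E w n := by
    intro w m n h
    rcases le_total m n with hle | hle
    · obtain ⟨d, rfl⟩ := Nat.exists_eq_add_of_le hle
      exact (hE_aux w m d h.symm).symm
    · obtain ⟨d, rfl⟩ := Nat.exists_eq_add_of_le hle
      exact hE_aux w n d h
  refine ⟨fun v => E (rep v) (idx v), ?_, ?_⟩
  · intro v
    have hrv : rep (T v) = rep v := (hrep_eq v (T v) ⟨1, by rw [pow_one]⟩).symm
    have h1 : (T ^ (idx v + 1)) (rep v) = T v := by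
      rw [pow_succ', Equiv.Perm.mul_apply, hidx v]
    have h2 : (T ^ idx (T v)) (rep v) = (T ^ (idx v + 1)) (rep v) := by
      rw [h1, ← hrv]; exact hidx (T v)
    show E (rep (T v)) (idx (T v)) = E (rep v) (idx v) + f v
    rw [hrv, hE (rep v) _ _ h2]
    simp only [E, Finset.sum_range_succ, hidx v]
  · intro v hv
    by_contra hcon
    push_neg at hcon
    have hall : ∀ j : ℕ, f ((T ^ j) v) = 0 := by
      intro j
      rw [hmod j v]
      exact hcon _ (Nat.mod_lt _ hp0)
    obtain ⟨n, hn⟩ : ∃ n : ℕ, (T ^ n) v = rep v := by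
      obtain ⟨m, hm⟩ := hrep v
      refine ⟨p * m - m, ?_⟩
      have hle : m ≤ p * m := Nat.le_mul_of_pos_left m hp0
      conv_lhs => rw [← hm]
      rw [← Equiv.Perm.mul_apply, ← pow_add, Nat.sub_add_cancel hle, pow_mul, hT,
        one_pow, Equiv.Perm.one_apply]
    apply hv
    show E (rep v) (idx v) = 0
    simp only [E]
    refine Finset.sum_eq_zero fun j _ => ?_
    rw [← hn, ← Equiv.Perm.mul_apply, ← pow_add]
    exact hall _

set_option linter.unusedSectionVars false
open nonZeroDivisors IsDedekindDomain FractionalIdeal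

section Dedekind

variable {R : Type*} [CommRing R] [IsDedekindDomain R]

private lemma map_aut_coe (g : RingAut R) (I : Ideal R) :
    Ideal.map g I = Ideal.map (g : R →+* R) I := rfl

private lemma map_aut_mul (g h : RingAut R) (I : Ideal R) :
    Ideal.map (g * h : RingAut R) I = Ideal.map g (Ideal.map h I) := by
  have hcomp : ((g * h : RingAut R) : R →+* R) = ((g : R →+* R).comp (h : R →+* R)) := by
    ext x; rfl
  rw [map_aut_coe (g * h), map_aut_coe g, map_aut_coe h, Ideal.map_map, hcomp]

private lemma map_aut_one (I : Ideal R) : Ideal.map (1 : RingAut R) I = I := by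
  have : Ideal.map ((1 : RingAut R) : R →+* R) I = Ideal.map (RingHom.id R) I := by
    congr 1
  rw [show Ideal.map (1 : RingAut R) I = Ideal.map ((1 : RingAut R) : R →+* R) I from rfl, this,
    Ideal.map_id]

private lemma map_aut_ne_bot (g : RingAut R) {I : Ideal R} (hI : I ≠ ⊥) :
    Ideal.map g I ≠ ⊥ :=
  fun h => hI ((Ideal.map_eq_bot_iff_of_injective g.injective).mp h)

/-- The permutation of height one primes induced by a ring automorphism. -/
noncomputable def primePerm (g : RingAut R) : Equiv.Perm (HeightOneSpectrum R) where
  toFun v := ⟨Ideal.map g v.asIdeal, Ideal.map_isPrime_of_equiv g (I := v.asIdeal), 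
    map_aut_ne_bot g v.ne_bot⟩
  invFun v := ⟨Ideal.map g⁻¹ v.asIdeal, Ideal.map_isPrime_of_equiv g⁻¹ (I := v.asIdeal),
    map_aut_ne_bot g⁻¹ v.ne_bot⟩
  left_inv v := by
    apply HeightOneSpectrum.ext
    show Ideal.map g⁻¹ (Ideal.map g v.asIdeal) = v.asIdeal
    rw [← map_aut_mul, inv_mul_cancel, map_aut_one]
  right_inv v := by
    apply HeightOneSpectrum.ext
    show Ideal.map g (Ideal.map g⁻¹ v.asIdeal) = v.asIdeal
    rw [← map_aut_mul, mul_inv_cancel, map_aut_one]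

@[simp] lemma primePerm_asIdeal (g : RingAut R) (v : HeightOneSpectrum R) :
    (primePerm g v).asIdeal = Ideal.map g v.asIdeal := rfl

/-- `primePerm` as a monoid hom. -/
noncomputable def primePermHom : RingAut R →* Equiv.Perm (HeightOneSpectrum R) where
  toFun := primePerm
  map_one' := by
    apply Equiv.ext; intro v
    apply HeightOneSpectrum.ext
    show Ideal.map (1 : RingAut R) v.asIdeal = v.asIdeal
    exact map_aut_one v.asIdeal
  map_mul' g h := by
    apply Equiv.ext; intro v
    apply HeightOneSpectrum.ext
    show Ideal.map (g * h) v.asIdeal = Ideal.map g (Ideal.map h v.asIdeal)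
    exact map_aut_mul g h v.asIdeal

variable (K : Type*) [Field K] [Algebra R K] [IsFractionRing R K]

private lemma prime_irred (v : HeightOneSpectrum R) : Irreducible (Associates.mk v.asIdeal) :=
  Associates.irreducible_mk.mpr (Ideal.prime_of_isPrime v.ne_bot v.isPrime).irreducible

/-- counts transform under ring automorphisms. -/
lemma count_map_aut (g : RingAut R) {J : Ideal R} (hJ : J ≠ 0) (v : HeightOneSpectrum R) :
    count K v (Ideal.map g J : FractionalIdeal R⁰ K) = count K (primePerm g⁻¹ v) J := by
  classical
  have hJm : Ideal.map g J ≠ 0 := map_aut_ne_bot g hJ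
  rw [count_coe K v hJm, count_coe K _ hJ]
  congr 1
  have key : ∀ n : ℕ,
      n ≤ (Associates.mk v.asIdeal).count (Associates.mk (Ideal.map g J)).factors ↔
      n ≤ (Associates.mk (primePerm g⁻¹ v).asIdeal).count (Associates.mk J).factors := by
    intro n
    rw [← Associates.prime_pow_dvd_iff_le (Associates.mk_ne_zero.mpr hJm) (prime_irred v),
      ← Associates.prime_pow_dvd_iff_le (Associates.mk_ne_zero.mpr hJ)
        (prime_irred (primePerm g⁻¹ v)),
      ← Associates.mk_pow, ← Associates.mk_pow, Associates.mk_le_mk_iff_dvd,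
      Associates.mk_le_mk_iff_dvd]
    constructor
    · rintro ⟨E, hE⟩
      refine ⟨Ideal.map g⁻¹ E, ?_⟩
      have := congrArg (Ideal.map (g⁻¹ : RingAut R)) hE
      rw [← map_aut_mul, inv_mul_cancel, map_aut_one, Ideal.map_mul] at this
      rw [this]
      congr 1
      rw [primePerm_asIdeal, Ideal.map_pow]
    · rintro ⟨E, hE⟩
      refine ⟨Ideal.map g E, ?_⟩
      have := congrArg (Ideal.map (g : RingAut R)) hE
      rw [Ideal.map_mul, Ideal.map_pow, primePerm_asIdeal, ← map_aut_mul,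
        mul_inv_cancel, map_aut_one] at this
      exact this
  exact Nat.le_antisymm ((key _).mp le_rfl) ((key _).mpr le_rfl)

/-- Two nonzero ideals with the same counts agree. -/
lemma ideal_eq_of_count {I J : Ideal R} (hI : I ≠ 0) (hJ : J ≠ 0)
    (h : ∀ v : HeightOneSpectrum R,
      count K v (I : FractionalIdeal R⁰ K) = count K v (J : FractionalIdeal R⁰ K)) :
    I = J := by
  have hI' : (I : FractionalIdeal R⁰ K) ≠ 0 := coeIdeal_ne_zero.mpr hI
  have hJ' : (J : FractionalIdeal R⁰ K) ≠ 0 := coeIdeal_ne_zero.mpr hJ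
  apply coeIdeal_injective (K := K)
  show (I : FractionalIdeal R⁰ K) = (J : FractionalIdeal R⁰ K)
  rw [← finprod_heightOneSpectrum_factorization' K hI',
    ← finprod_heightOneSpectrum_factorization' K hJ']
  exact finprod_congr fun v => by rw [h v]

end Dedekind

section IdealH90

variable {R : Type*} [CommRing R] [IsDedekindDomain R]
  (K : Type*) [Field K] [Algebra R K] [IsFractionRing R K]

set_option maxHeartbeats 1000000 in
/-- Hilbert 90 for ideals in a cyclic situation of prime order. -/
lemma ideal_h90 {p : ℕ} (hp : p.Prime) (g : RingAut R) (hgp : g ^ p = 1)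
    {a b : R} (ha : a ≠ 0) (hb : b ≠ 0)
    (hN : Ideal.span {∏ j ∈ Finset.range p, (g ^ j) a} =
      Ideal.span {∏ j ∈ Finset.range p, (g ^ j) b}) :
    ∃ I : Ideal R, I ≠ 0 ∧
      (Ideal.map g I : FractionalIdeal R⁰ K) =
        spanSingleton R⁰ (algebraMap R K a / algebraMap R K b) * (I : FractionalIdeal R⁰ K) := by
  classical
  have hp0 : 0 < p := hp.pos
  -- the permutation on primes
  set T : Equiv.Perm (HeightOneSpectrum R) := primePermHom g⁻¹ with hT_def
  have hTpow : ∀ j : ℕ, T ^ j = primePermHom (g⁻¹ ^ j) := fun j => (map_pow primePermHom g⁻¹ j).symm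
  have hTp : T ^ p = 1 := by
    rw [hTpow, inv_pow, hgp, inv_one, MonoidHom.map_one]
  -- counts of span ideals transform via T
  have hspan_ne : ∀ (j : ℕ) (x : R), x ≠ 0 → Ideal.span {(g ^ j) x} ≠ (0 : Ideal R) := by
    intro j x hx
    rw [ne_eq, Ideal.zero_eq_bot, Ideal.span_singleton_eq_bot]
    intro h
    apply hx
    have := congrArg (g ^ j).symm h
    exact (map_eq_zero_iff _ (EquivLike.injective (g ^ j))).mp h
  have hspan_ne0 : ∀ (x : R), x ≠ 0 → Ideal.span {x} ≠ (0 : Ideal R) := by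
    intro x hx
    rw [ne_eq, Ideal.zero_eq_bot, Ideal.span_singleton_eq_bot]
    exact hx
  have hcnt : ∀ (x : R), x ≠ 0 → ∀ (j : ℕ) (v : HeightOneSpectrum R),
      count K v (Ideal.span {(g ^ j) x} : FractionalIdeal R⁰ K) =
      count K ((T ^ j) v) (Ideal.span {x} : FractionalIdeal R⁰ K) := by
    intro x hx j v
    have hmap : Ideal.span {(g ^ j) x} = Ideal.map (g ^ j) (Ideal.span {x}) := by
      rw [Ideal.map_span, Set.image_singleton]
    rw [hmap, count_map_aut K (g ^ j) (hspan_ne0 x hx) v]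
    have hTj : primePerm (g ^ j)⁻¹ v = (T ^ j) v := by
      rw [hTpow j, inv_pow]; rfl
    rw [hTj]
  -- f and its orbit-sum property
  set f : HeightOneSpectrum R → ℤ := fun v =>
    count K v (Ideal.span {a} : FractionalIdeal R⁰ K) -
      count K v (Ideal.span {b} : FractionalIdeal R⁰ K) with hf_def
  have hprod_count : ∀ (x : R), x ≠ 0 → ∀ v,
      count K v (Ideal.span {∏ j ∈ Finset.range p, (g ^ j) x} : FractionalIdeal R⁰ K) =
      ∑ j ∈ Finset.range p, count K ((T ^ j) v) (Ideal.span {x} : FractionalIdeal R⁰ K) := by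
    intro x hx v
    rw [← Ideal.prod_span_singleton]
    have hcoe : ((∏ j ∈ Finset.range p, Ideal.span {(g ^ j) x} : Ideal R) : FractionalIdeal R⁰ K)
        = ∏ j ∈ Finset.range p, (Ideal.span {(g ^ j) x} : FractionalIdeal R⁰ K) := by
      exact map_prod (FractionalIdeal.coeIdealHom R⁰ K) _ _
    rw [hcoe, count_prod K v _ _ (fun j _ => coeIdeal_ne_zero.mpr (hspan_ne j x hx))]
    exact Finset.sum_congr rfl fun j _ => hcnt x hx j v
  have hsum : ∀ v, ∑ j ∈ Finset.range p, f ((T ^ j) v) = 0 := by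
    intro v
    simp only [hf_def, Finset.sum_sub_distrib]
    rw [← hprod_count a ha v, ← hprod_count b hb v, hN, sub_self]
  obtain ⟨e, he, hesupp⟩ := exists_partial_sums T hp hTp f hsum
  -- finite support of e
  have hffin : {v | f v ≠ 0}.Finite := by
    have h1 := Filter.eventually_cofinite.mp (finite_factors (Ideal.span {a} : FractionalIdeal R⁰ K))
    have h2 := Filter.eventually_cofinite.mp (finite_factors (Ideal.span {b} : FractionalIdeal R⁰ K))
    refine Set.Finite.subset (h1.union h2) ?_
    intro v hv
    by_contra hc
    simp only [Set.mem_union, Set.mem_setOf_eq, not_or, not_not] at hc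
    apply hv
    show f v = 0
    simp only [hf_def]
    rw [hc.1, hc.2]
    exact sub_self 0
  have hefin : {v | e v ≠ 0}.Finite := by
    have : {v | e v ≠ 0} ⊆ ⋃ j ∈ Finset.range p, (fun v => (T ^ j) v) ⁻¹' {v | f v ≠ 0} := by
      intro v hv
      obtain ⟨j, hj, hfj⟩ := hesupp v hv
      exact Set.mem_biUnion (Finset.mem_range.mpr hj) hfj
    refine Set.Finite.subset ?_ this
    exact Set.Finite.biUnion (Finset.range p).finite_toSet
      (fun j _ => Set.Finite.preimage (Equiv.injective _).injOn hffin)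
  -- the ideals B, C
  set B : Ideal R := ∏ᶠ v, v.asIdeal ^ (e v).toNat with hB_def
  set C : Ideal R := ∏ᶠ v, v.asIdeal ^ (-(e v)).toNat with hC_def
  have hsubB : Function.mulSupport (fun v : HeightOneSpectrum R => v.asIdeal ^ (e v).toNat)
      ⊆ hefin.toFinset := by
    intro v hv
    simp only [Set.Finite.coe_toFinset, Set.mem_setOf_eq]
    intro hev
    apply hv
    simp [hev]
  have hsubC : Function.mulSupport (fun v : HeightOneSpectrum R => v.asIdeal ^ (-(e v)).toNat)
      ⊆ hefin.toFinset := by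
    intro v hv
    simp only [Set.Finite.coe_toFinset, Set.mem_setOf_eq]
    intro hev
    apply hv
    simp [hev]
  have hB0 : B ≠ 0 := by
    rw [hB_def, finprod_eq_finset_prod_of_mulSupport_subset _ hsubB]
    rw [Finset.prod_ne_zero_iff]
    exact fun v _ => pow_ne_zero _ v.ne_bot
  have hC0 : C ≠ 0 := by
    rw [hC_def, finprod_eq_finset_prod_of_mulSupport_subset _ hsubC]
    rw [Finset.prod_ne_zero_iff]
    exact fun v _ => pow_ne_zero _ v.ne_bot
  -- counts of B and C
  have hcount_pos : ∀ (E : HeightOneSpectrum R → ℤ), {v | E v ≠ 0}.Finite →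
      ∀ v, count K v ((∏ᶠ w, w.asIdeal ^ (E w).toNat : Ideal R) : FractionalIdeal R⁰ K)
        = max (E v) 0 := by
    intro E hE v
    have hsub : Function.mulSupport (fun w : HeightOneSpectrum R => w.asIdeal ^ (E w).toNat)
        ⊆ hE.toFinset := by
      intro w hw
      simp only [Set.Finite.coe_toFinset, Set.mem_setOf_eq]
      intro hEw
      apply hw
      simp [hEw]
    have this1 : ∀ w : HeightOneSpectrum R,
        ((w.asIdeal ^ (E w).toNat : Ideal R) : FractionalIdeal R⁰ K)
        = (w.asIdeal : FractionalIdeal R⁰ K) ^ (max (E w) 0) := by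
      intro w
      rw [coeIdeal_pow, ← zpow_natCast, Int.toNat_eq_max]
    have hsub2 : Function.mulSupport
        (fun w : HeightOneSpectrum R => (w.asIdeal : FractionalIdeal R⁰ K) ^ (max (E w) 0))
        ⊆ hE.toFinset := by
      intro w hw
      simp only [Set.Finite.coe_toFinset, Set.mem_setOf_eq]
      intro hEw
      apply hw
      simp only [Function.mem_mulSupport, hEw, ne_eq, not_not]
      norm_num
    have hcoe : ((∏ᶠ w, w.asIdeal ^ (E w).toNat : Ideal R) : FractionalIdeal R⁰ K)
        = ∏ᶠ w, ((w.asIdeal : FractionalIdeal R⁰ K) ^ (max (E w) 0)) :=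
      calc ((∏ᶠ w, w.asIdeal ^ (E w).toNat : Ideal R) : FractionalIdeal R⁰ K)
          = ((∏ i ∈ hE.toFinset, i.asIdeal ^ (E i).toNat : Ideal R) : FractionalIdeal R⁰ K) := by
            rw [finprod_eq_finset_prod_of_mulSupport_subset _ hsub]
        _ = ∏ i ∈ hE.toFinset, ((i.asIdeal ^ (E i).toNat : Ideal R) : FractionalIdeal R⁰ K) :=
            map_prod (FractionalIdeal.coeIdealHom R⁰ K) _ _
        _ = ∏ i ∈ hE.toFinset, (i.asIdeal : FractionalIdeal R⁰ K) ^ (max (E i) 0) :=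
            Finset.prod_congr rfl (fun w _ => this1 w)
        _ = ∏ᶠ w, ((w.asIdeal : FractionalIdeal R⁰ K) ^ (max (E w) 0)) :=
            (finprod_eq_finset_prod_of_mulSupport_subset _ hsub2).symm
    rw [hcoe, count_finprod K v _ ?_]
    · rw [Filter.eventually_cofinite]
      refine Set.Finite.subset hE ?_
      intro w hw
      simp only [Set.mem_setOf_eq] at hw ⊢
      intro hEw
      exact hw (by simp [hEw])
  have hcountB : ∀ v, count K v (B : FractionalIdeal R⁰ K) = max (e v) 0 :=
    hcount_pos e hefin
  have hcountC : ∀ v, count K v (C : FractionalIdeal R⁰ K) = max (-(e v)) 0 := by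
    intro v
    have hnegfin : {v : HeightOneSpectrum R | -(e v) ≠ 0}.Finite := by
      refine Set.Finite.subset hefin ?_
      intro w hw
      simpa using hw
    exact hcount_pos (fun w => -(e w)) hnegfin v
  -- the ideal I
  set D : Ideal R := ∏ j ∈ Finset.range (p - 1), Ideal.map (g ^ (j + 1)) C with hD_def
  have hD0 : D ≠ 0 := by
    rw [hD_def, Finset.prod_ne_zero_iff]
    exact fun j _ => map_aut_ne_bot _ hC0
  set I : Ideal R := B * D with hI_def
  have hI0 : I ≠ 0 := mul_ne_zero hB0 hD0
  have hmapI0 : Ideal.map g I ≠ 0 := map_aut_ne_bot g hI0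
  -- count of I
  have hTv : ∀ (m : ℕ) (v : HeightOneSpectrum R), count K v (Ideal.map (g ^ m) C : FractionalIdeal R⁰ K)
      = max (-(e ((T ^ m) v))) 0 := by
    intro m v
    rw [count_map_aut K (g ^ m) hC0 v]
    have hTj : primePerm (g ^ m)⁻¹ v = (T ^ m) v := by
      rw [hTpow m, inv_pow]; rfl
    rw [hTj]
    exact hcountC _
  have hcountI : ∀ v, count K v (I : FractionalIdeal R⁰ K)
      = max (e v) 0 + ∑ j ∈ Finset.range (p - 1), max (-(e ((T ^ (j + 1)) v))) 0 := by
    intro v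
    rw [hI_def, coeIdeal_mul, count_mul K v (coeIdeal_ne_zero.mpr hB0) (coeIdeal_ne_zero.mpr hD0)]
    rw [hcountB v]
    congr 1
    rw [hD_def]
    have hcoe : ((∏ j ∈ Finset.range (p - 1), Ideal.map (g ^ (j + 1)) C : Ideal R) : FractionalIdeal R⁰ K)
        = ∏ j ∈ Finset.range (p - 1), ((Ideal.map (g ^ (j + 1)) C : Ideal R) : FractionalIdeal R⁰ K) :=
      map_prod (FractionalIdeal.coeIdealHom R⁰ K) _ _
    rw [hcoe, count_prod K v _ _ (fun j _ => coeIdeal_ne_zero.mpr (map_aut_ne_bot _ hC0))]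
    exact Finset.sum_congr rfl fun j _ => hTv (j + 1) v
  -- the key integral identity
  have hkey : Ideal.map g I * Ideal.span {b} = Ideal.span {a} * I := by
    apply ideal_eq_of_count K (mul_ne_zero hmapI0 (hspan_ne0 b hb))
      (mul_ne_zero (hspan_ne0 a ha) hI0)
    intro v
    rw [coeIdeal_mul, coeIdeal_mul,
      count_mul K v (coeIdeal_ne_zero.mpr hmapI0) (coeIdeal_ne_zero.mpr (hspan_ne0 b hb)),
      count_mul K v (coeIdeal_ne_zero.mpr (hspan_ne0 a ha)) (coeIdeal_ne_zero.mpr hI0)]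
    have hmapIc : count K v (Ideal.map g I : FractionalIdeal R⁰ K) = count K (T v) (I : FractionalIdeal R⁰ K) := by
      rw [count_map_aut K g hI0 v]
      rfl
    rw [hmapIc, hcountI (T v), hcountI v]
    -- reindex the sum
    have hTh : ∀ (j : ℕ), (T ^ j) (T v) = (T ^ (j + 1)) v := by
      intro j
      rw [pow_succ, Equiv.Perm.mul_apply]
    set h : ℕ → ℤ := fun m => max (-(e ((T ^ m) v))) 0 with hh_def
    have hsum1 : ∑ j ∈ Finset.range (p - 1), max (-(e ((T ^ (j + 1)) (T v)))) 0
        = ∑ j ∈ Finset.range (p - 1), h (j + 2) := by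
      refine Finset.sum_congr rfl fun j _ => ?_
      rw [hTh (j + 1), hh_def]
    have hshift : ∑ j ∈ Finset.range (p - 1), h (j + 2) + h 1
        = ∑ j ∈ Finset.range (p - 1), h (j + 1) + h p := by
      have h1 : ∑ j ∈ Finset.range ((p - 1) + 1), h (j + 1)
          = (∑ j ∈ Finset.range (p - 1), h ((j + 1) + 1)) + h (0 + 1) :=
        Finset.sum_range_succ' (fun j => h (j + 1)) (p - 1)
      have h2 : ∑ j ∈ Finset.range ((p - 1) + 1), h (j + 1)
          = (∑ j ∈ Finset.range (p - 1), h (j + 1)) + h ((p - 1) + 1) :=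
        Finset.sum_range_succ (fun j => h (j + 1)) (p - 1)
      have hps : (p - 1) + 1 = p := Nat.succ_pred_eq_of_pos hp0
      rw [hps] at h1 h2
      have := h1.symm.trans h2
      simpa [hps] using this
    have hp_eq : h p = h 0 := by
      simp only [hh_def]
      congr 2
      rw [hTp]
      simp
    have hev : e (T v) = e v + f v := he v
    have hfv : f v = count K v (Ideal.span {a} : FractionalIdeal R⁰ K)
        - count K v (Ideal.span {b} : FractionalIdeal R⁰ K) := rfl
    have h1v : h 1 = max (-(e (T v))) 0 := by
      simp only [hh_def, pow_one]
    have h0v : h 0 = max (-(e v)) 0 := by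
      simp only [hh_def, pow_zero]
      rfl
    rw [hsum1]
    -- now pure arithmetic
    have harith : max (e (T v)) 0 + (∑ j ∈ Finset.range (p - 1), h (j + 2))
        + count K v (Ideal.span {b} : FractionalIdeal R⁰ K)
        = count K v (Ideal.span {a} : FractionalIdeal R⁰ K)
        + (max (e v) 0 + ∑ j ∈ Finset.range (p - 1), h (j + 1)) := by
      have := hshift
      rw [hp_eq, h1v, h0v] at this
      omega
    linarith [harith]
  -- conclude
  refine ⟨I, hI0, ?_⟩
  have hcoe := congrArg (fun J : Ideal R => (J : FractionalIdeal R⁰ K)) hkey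
  simp only [coeIdeal_mul, coeIdeal_span_singleton] at hcoe
  have hbK : algebraMap R K b ≠ 0 := by
    rw [ne_eq, map_eq_zero_iff _ (IsFractionRing.injective R K)]
    exact hb
  have hspanb : spanSingleton R⁰ (algebraMap R K b) ≠ 0 := by
    rw [ne_eq, spanSingleton_eq_zero_iff]
    exact hbK
  apply mul_right_cancel₀ hspanb
  rw [hcoe]
  rw [mul_comm (spanSingleton R⁰ (algebraMap R K a / algebraMap R K b)) _, mul_assoc,
    spanSingleton_mul_spanSingleton, div_mul_cancel₀ _ hbK, mul_comm]
end IdealH90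


section NumberFieldLayer

open NumberField nonZeroDivisors

variable {p : ℕ} (k : Type*) {L : Type*} [Field k] [Field L] [NumberField k] [NumberField L]
  [Algebra k L] [IsGalois k L] [FiniteDimensional k L]

private lemma card_gal (hp : p.Prime) (hdeg : Module.finrank k L = p) :
    Fintype.card (L ≃ₐ[k] L) = p := by
  rw [← Nat.card_eq_fintype_card, IsGalois.card_aut_eq_finrank, hdeg]

private lemma orderOf_sigma (hp : p.Prime) (hdeg : Module.finrank k L = p)
    (σ : L ≃ₐ[k] L) (hgen : ∀ g : L ≃ₐ[k] L, g ∈ Subgroup.zpowers σ) : orderOf σ = p := by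
  have hcard := card_gal k hp hdeg
  have hdvd : orderOf σ ∣ p := hcard ▸ orderOf_dvd_card
  rcases (Nat.Prime.eq_one_or_self_of_dvd hp _ hdvd) with h1 | h
  · exfalso
    have hσ1 : σ = 1 := orderOf_eq_one_iff.mp h1
    have : Nontrivial (L ≃ₐ[k] L) := Fintype.one_lt_card_iff_nontrivial.mp
      (by rw [hcard]; exact hp.one_lt)
    obtain ⟨g, hg⟩ := exists_ne (1 : L ≃ₐ[k] L)
    obtain ⟨m, hm⟩ := Subgroup.mem_zpowers_iff.mp (hgen g)
    rw [hσ1, one_zpow] at hm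
    exact hg hm.symm
  · exact h

private lemma exists_pow_eq (hp : p.Prime) (hdeg : Module.finrank k L = p)
    (σ : L ≃ₐ[k] L) (hgen : ∀ g : L ≃ₐ[k] L, g ∈ Subgroup.zpowers σ) :
    ∀ g : L ≃ₐ[k] L, ∃ n : ℕ, n < p ∧ σ ^ n = g := by
  intro g
  have horder := orderOf_sigma k hp hdeg σ hgen
  obtain ⟨m, hm⟩ := Subgroup.mem_zpowers_iff.mp (hgen g)
  have hp0 : (0 : ℤ) < (p : ℤ) := by exact_mod_cast hp.pos
  refine ⟨(m % (p : ℤ)).toNat, ?_, ?_⟩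
  · have h1 : m % (p : ℤ) < (p : ℤ) := Int.emod_lt_of_pos m hp0
    omega
  · have h0 : (0 : ℤ) ≤ m % (p : ℤ) := Int.emod_nonneg m (by exact_mod_cast hp.ne_zero)
    have : σ ^ ((m % (p : ℤ)).toNat : ℤ) = σ ^ m := by
      rw [Int.toNat_of_nonneg h0, ← horder, zpow_mod_orderOf]
    rw [← zpow_natCast, this, hm]

private lemma sigma_pow_p (hp : p.Prime) (hdeg : Module.finrank k L = p)
    (σ : L ≃ₐ[k] L) (hgen : ∀ g : L ≃ₐ[k] L, g ∈ Subgroup.zpowers σ) : σ ^ p = 1 := by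
  rw [← orderOf_sigma k hp hdeg σ hgen]
  exact pow_orderOf_eq_one σ

private lemma norm_eq_prod_pow (hp : p.Prime) (hdeg : Module.finrank k L = p)
    (σ : L ≃ₐ[k] L) (hgen : ∀ g : L ≃ₐ[k] L, g ∈ Subgroup.zpowers σ) (x : L) :
    algebraMap k L (Algebra.norm k x) = ∏ j ∈ Finset.range p, (σ ^ j) x := by
  rw [Algebra.norm_eq_prod_automorphisms]
  have horder := orderOf_sigma k hp hdeg σ hgen
  refine (Finset.prod_bij (fun (j : ℕ) (_ : j ∈ Finset.range p) => σ ^ j) ?_ ?_ ?_ ?_).symm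
  · intro a _; exact Finset.mem_univ _
  · intro a ha b hb hab
    have := pow_eq_pow_iff_modEq.mp hab
    rw [horder] at this
    simp only [Finset.mem_range] at ha hb
    rwa [Nat.ModEq, Nat.mod_eq_of_lt ha, Nat.mod_eq_of_lt hb] at this
  · intro g _
    obtain ⟨n, hn, hng⟩ := exists_pow_eq k hp hdeg σ hgen g
    exact ⟨n, Finset.mem_range.mpr hn, hng⟩
  · intro a _; rfl

/-- The automorphism of the ring of integers attached to `σ`. -/
noncomputable def gAut (σ : L ≃ₐ[k] L) : RingAut (𝓞 L) :=
  (galRestrict (𝓞 k) k L (𝓞 L) σ).toRingEquiv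

lemma gAut_pow_apply (σ : L ≃ₐ[k] L) (j : ℕ) (x : 𝓞 L) :
    ((gAut k σ) ^ j) x = (galRestrict (𝓞 k) k L (𝓞 L) (σ ^ j)) x := by
  induction j generalizing x with
  | zero =>
      rw [pow_zero, pow_zero, _root_.map_one (galRestrict (𝓞 k) k L (𝓞 L))]
      rfl
  | succ j ih =>
      rw [pow_succ, pow_succ, _root_.map_mul (galRestrict (𝓞 k) k L (𝓞 L))]
      show ((gAut k σ) ^ j) ((gAut k σ) x) = (galRestrict (𝓞 k) k L (𝓞 L) (σ ^ j))
        ((galRestrict (𝓞 k) k L (𝓞 L) σ) x)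
      rw [ih ((gAut k σ) x)]
      rfl

lemma algebraMap_gAut_pow (σ : L ≃ₐ[k] L) (j : ℕ) (x : 𝓞 L) :
    algebraMap (𝓞 L) L (((gAut k σ) ^ j) x) = (σ ^ j) (algebraMap (𝓞 L) L x) := by
  rw [gAut_pow_apply, algebraMap_galRestrict_apply]

lemma algebraMap_gAut (σ : L ≃ₐ[k] L) (x : 𝓞 L) :
    algebraMap (𝓞 L) L ((gAut k σ) x) = σ (algebraMap (𝓞 L) L x) := by
  have := algebraMap_gAut_pow k σ 1 x
  rwa [pow_one, pow_one] at this

lemma gAut_pow_p (hp : p.Prime) (hdeg : Module.finrank k L = p)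
    (σ : L ≃ₐ[k] L) (hgen : ∀ g : L ≃ₐ[k] L, g ∈ Subgroup.zpowers σ) :
    (gAut k σ) ^ p = 1 := by
  apply RingEquiv.ext
  intro x
  have h1 := gAut_pow_apply k σ p x
  rw [sigma_pow_p k hp hdeg σ hgen, map_one (galRestrict (𝓞 k) k L (𝓞 L))] at h1
  exact h1

lemma norm_prod_int (hp : p.Prime) (hdeg : Module.finrank k L = p)
    (σ : L ≃ₐ[k] L) (hgen : ∀ g : L ≃ₐ[k] L, g ∈ Subgroup.zpowers σ) (x : 𝓞 L) :
    algebraMap (𝓞 L) L (∏ j ∈ Finset.range p, ((gAut k σ) ^ j) x) =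
      algebraMap k L (Algebra.norm k (algebraMap (𝓞 L) L x)) := by
  rw [_root_.map_prod, norm_eq_prod_pow k hp hdeg σ hgen]
  exact Finset.prod_congr rfl fun j _ => algebraMap_gAut_pow k σ j x

end NumberFieldLayer

section Engine

open NumberField nonZeroDivisors FractionalIdeal

variable {p : ℕ} (k : Type*) {L : Type*} [Field k] [Field L] [NumberField k] [NumberField L]
  [Algebra k L] [IsGalois k L] [FiniteDimensional k L]

private lemma algL_inj : Function.Injective (algebraMap (𝓞 L) L) :=
  IsFractionRing.injective _ _

private lemma algL_ne_zero {x : 𝓞 L} (hx : x ≠ 0) : algebraMap (𝓞 L) L x ≠ 0 := by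
  rw [ne_eq, map_eq_zero_iff _ (algL_inj)]
  exact hx

private lemma exists_int_rep (β : Lˣ) : ∃ a b : 𝓞 L, a ≠ 0 ∧ b ≠ 0 ∧
    (β : L) * algebraMap (𝓞 L) L b = algebraMap (𝓞 L) L a := by
  obtain ⟨a, b, hb, hdiv⟩ := IsFractionRing.div_surjective (A := 𝓞 L) (β : L)
  have hbne : b ≠ 0 := nonZeroDivisors.ne_zero hb
  have hbL : algebraMap (𝓞 L) L b ≠ 0 := algL_ne_zero hbne
  have hab : (β : L) * algebraMap (𝓞 L) L b = algebraMap (𝓞 L) L a := by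
    rw [← hdiv, div_mul_cancel₀ _ hbL]
  have hane : a ≠ 0 := by
    intro h
    apply Units.ne_zero β
    rw [h, _root_.map_zero] at hab
    exact (mul_eq_zero.mp hab).resolve_right hbL
  exact ⟨a, b, hane, hbne, hab⟩

private lemma rel_to_integral (σ : L ≃ₐ[k] L) {I : Ideal (𝓞 L)} {α : Lˣ} {a b : 𝓞 L}
    (hab : (α : L) * algebraMap (𝓞 L) L b = algebraMap (𝓞 L) L a)
    (hrel : (Ideal.map (gAut k σ) I : FractionalIdeal (𝓞 L)⁰ L) =
      spanSingleton (𝓞 L)⁰ (α : L) * (I : FractionalIdeal (𝓞 L)⁰ L)) :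
    Ideal.span {b} * Ideal.map (gAut k σ) I = Ideal.span {a} * I := by
  apply coeIdeal_injective (K := L)
  show ((Ideal.span {b} * Ideal.map (gAut k σ) I : Ideal (𝓞 L)) : FractionalIdeal (𝓞 L)⁰ L)
    = ((Ideal.span {a} * I : Ideal (𝓞 L)) : FractionalIdeal (𝓞 L)⁰ L)
  rw [coeIdeal_mul, coeIdeal_mul, coeIdeal_span_singleton, coeIdeal_span_singleton, hrel,
    ← mul_assoc, spanSingleton_mul_spanSingleton, mul_comm (algebraMap (𝓞 L) L b) (α : L), hab]

/-- The norm of `α` with `σ(I) = (α)I` is a unit of `𝓞 k`. -/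
lemma norm_is_unit (hp : p.Prime) (hdeg : Module.finrank k L = p)
    (σ : L ≃ₐ[k] L) (hgen : ∀ g : L ≃ₐ[k] L, g ∈ Subgroup.zpowers σ)
    {I : Ideal (𝓞 L)} (hI : I ≠ 0) {α : Lˣ}
    (hrel : (Ideal.map (gAut k σ) I : FractionalIdeal (𝓞 L)⁰ L) =
      spanSingleton (𝓞 L)⁰ (α : L) * (I : FractionalIdeal (𝓞 L)⁰ L)) :
    ∃ u : (𝓞 k)ˣ, algebraMap (𝓞 k) k u = Algebra.norm k (α : L) := by
  obtain ⟨a, b, ha, hb, hab⟩ := exists_int_rep α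
  have E0 := rel_to_integral k σ hab hrel
  have hgp : (gAut k σ) ^ p = 1 := gAut_pow_p k hp hdeg σ hgen
  have Ej : ∀ j : ℕ, Ideal.span {((gAut k σ) ^ j) b} * Ideal.map ((gAut k σ) ^ (j + 1)) I
      = Ideal.span {((gAut k σ) ^ j) a} * Ideal.map ((gAut k σ) ^ j) I := by
    intro j
    have h := congrArg (Ideal.map ((gAut k σ) ^ j)) E0
    rw [Ideal.map_mul, Ideal.map_mul, Ideal.map_span, Ideal.map_span, Set.image_singleton,
      Set.image_singleton, ← map_aut_mul, ← pow_succ] at h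
    exact h
  have hprod : (∏ j ∈ Finset.range p, Ideal.span {((gAut k σ) ^ j) b}) *
      (∏ j ∈ Finset.range p, Ideal.map ((gAut k σ) ^ (j + 1)) I)
      = (∏ j ∈ Finset.range p, Ideal.span {((gAut k σ) ^ j) a}) *
      (∏ j ∈ Finset.range p, Ideal.map ((gAut k σ) ^ j) I) := by
    rw [← Finset.prod_mul_distrib, ← Finset.prod_mul_distrib]
    exact Finset.prod_congr rfl fun j _ => Ej j
  have hps : p - 1 + 1 = p := Nat.succ_pred_eq_of_pos hp.pos
  have hF0 : Ideal.map ((gAut k σ) ^ p) I = Ideal.map ((gAut k σ) ^ 0) I := by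
    rw [hgp, pow_zero]
  have hshift : ∏ j ∈ Finset.range p, Ideal.map ((gAut k σ) ^ (j + 1)) I
      = ∏ j ∈ Finset.range p, Ideal.map ((gAut k σ) ^ j) I := by
    have h1 : ∏ j ∈ Finset.range (p - 1 + 1), Ideal.map ((gAut k σ) ^ (j + 1)) I
        = (∏ j ∈ Finset.range (p - 1), Ideal.map ((gAut k σ) ^ (j + 1)) I) *
          Ideal.map ((gAut k σ) ^ (p - 1 + 1)) I :=
      Finset.prod_range_succ _ _
    have h2 : ∏ j ∈ Finset.range (p - 1 + 1), Ideal.map ((gAut k σ) ^ j) I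
        = (∏ j ∈ Finset.range (p - 1), Ideal.map ((gAut k σ) ^ (j + 1)) I) *
          Ideal.map ((gAut k σ) ^ 0) I :=
      Finset.prod_range_succ' _ _
    rw [hps] at h1 h2
    rw [h1, h2, hF0]
  have hXne : (∏ j ∈ Finset.range p, Ideal.map ((gAut k σ) ^ j) I) ≠ 0 :=
    Finset.prod_ne_zero_iff.mpr fun j _ => map_aut_ne_bot _ hI
  rw [hshift] at hprod
  have hspan := mul_right_cancel₀ hXne hprod
  rw [Ideal.prod_span_singleton, Ideal.prod_span_singleton] at hspan
  obtain ⟨w, hw⟩ := Ideal.span_singleton_eq_span_singleton.mp hspan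
  -- push to L
  have hwL := congrArg (algebraMap (𝓞 L) L) hw
  rw [_root_.map_mul, norm_prod_int k hp hdeg σ hgen, norm_prod_int k hp hdeg σ hgen] at hwL
  have hnormb : Algebra.norm k (algebraMap (𝓞 L) L b) ≠ 0 :=
    Algebra.norm_ne_zero_iff.mpr (algL_ne_zero hb)
  have hNbL : algebraMap k L (Algebra.norm k (algebraMap (𝓞 L) L b)) ≠ 0 := by
    rw [ne_eq, map_eq_zero_iff _ (algebraMap k L).injective]
    exact hnormb
  have hna : Algebra.norm k (algebraMap (𝓞 L) L a)
      = Algebra.norm k (α : L) * Algebra.norm k (algebraMap (𝓞 L) L b) := by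
    rw [← _root_.map_mul, hab]
  have hwLy : algebraMap (𝓞 L) L (w : 𝓞 L) = algebraMap k L (Algebra.norm k (α : L)) := by
    apply mul_left_cancel₀ hNbL
    rw [hwL, hna, _root_.map_mul]
    ring
  have hy0 : Algebra.norm k (α : L) ≠ 0 := Algebra.norm_ne_zero_iff.mpr (Units.ne_zero α)
  have hyint : IsIntegral ℤ (Algebra.norm k (α : L)) := by
    rw [← isIntegral_algebraMap_iff (algebraMap k L).injective (A := k) (B := L)]
    rw [← hwLy]
    exact NumberField.RingOfIntegers.isIntegral_coe (w : 𝓞 L)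
  have hwinv : algebraMap (𝓞 L) L ((w⁻¹ : (𝓞 L)ˣ) : 𝓞 L)
      = algebraMap k L ((Algebra.norm k (α : L))⁻¹) := by
    have h1 : algebraMap (𝓞 L) L ((w : 𝓞 L) * ((w⁻¹ : (𝓞 L)ˣ) : 𝓞 L)) = 1 := by
      rw [← Units.val_mul, mul_inv_cancel, Units.val_one, _root_.map_one]
    rw [_root_.map_mul, hwLy] at h1
    rw [_root_.map_inv₀]
    exact (eq_inv_of_mul_eq_one_right h1).symm ▸ rfl
  have hyinvint : IsIntegral ℤ ((Algebra.norm k (α : L))⁻¹) := by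
    rw [← isIntegral_algebraMap_iff (algebraMap k L).injective (A := k) (B := L)]
    rw [← hwinv]
    exact NumberField.RingOfIntegers.isIntegral_coe _
  refine ⟨⟨⟨Algebra.norm k (α : L), hyint⟩, ⟨(Algebra.norm k (α : L))⁻¹, hyinvint⟩, ?_, ?_⟩, rfl⟩
  · apply IsFractionRing.injective (𝓞 k) k
    exact (mul_inv_cancel₀ hy0).trans (_root_.map_one _).symm
  · apply IsFractionRing.injective (𝓞 k) k
    exact (inv_mul_cancel₀ hy0).trans (_root_.map_one _).symm

/-- If the class is strongly ambiguous then the norm of `α` is a norm of a unit. -/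
lemma norm_in_NEL_of_invariant (σ : L ≃ₐ[k] L)
    {I I₀ : Ideal (𝓞 L)} (hI : I ≠ 0) (hI₀ : I₀ ≠ 0) {α : Lˣ}
    (hrel : (Ideal.map (gAut k σ) I : FractionalIdeal (𝓞 L)⁰ L) =
      spanSingleton (𝓞 L)⁰ (α : L) * (I : FractionalIdeal (𝓞 L)⁰ L))
    (hinv : Ideal.map (gAut k σ) I₀ = I₀)
    {x y : 𝓞 L} (hx : x ≠ 0) (hy : y ≠ 0)
    (hxy : Ideal.span {x} * I₀ = Ideal.span {y} * I) :
    ∃ w : (𝓞 L)ˣ, Algebra.norm k (algebraMap (𝓞 L) L (w : 𝓞 L)) = Algebra.norm k (α : L) := by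
  have E2 : Ideal.span {(gAut k σ) x} * I₀ = Ideal.span {(gAut k σ) y} * Ideal.map (gAut k σ) I := by
    have h := congrArg (Ideal.map (gAut k σ)) hxy
    rw [Ideal.map_mul, Ideal.map_mul, Ideal.map_span, Ideal.map_span, Set.image_singleton,
      Set.image_singleton, hinv] at h
    exact h
  -- fractional versions
  have F1 : spanSingleton (𝓞 L)⁰ (algebraMap (𝓞 L) L x) * (I₀ : FractionalIdeal (𝓞 L)⁰ L)
      = spanSingleton (𝓞 L)⁰ (algebraMap (𝓞 L) L y) * (I : FractionalIdeal (𝓞 L)⁰ L) := by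
    have h := congrArg (fun J : Ideal (𝓞 L) => (J : FractionalIdeal (𝓞 L)⁰ L)) hxy
    simpa only [coeIdeal_mul, coeIdeal_span_singleton] using h
  have F2 : spanSingleton (𝓞 L)⁰ (σ (algebraMap (𝓞 L) L x)) * (I₀ : FractionalIdeal (𝓞 L)⁰ L)
      = spanSingleton (𝓞 L)⁰ (σ (algebraMap (𝓞 L) L y)) *
        (spanSingleton (𝓞 L)⁰ (α : L) * (I : FractionalIdeal (𝓞 L)⁰ L)) := by
    have h := congrArg (fun J : Ideal (𝓞 L) => (J : FractionalIdeal (𝓞 L)⁰ L)) E2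
    simp only [coeIdeal_mul, coeIdeal_span_singleton] at h
    rw [algebraMap_gAut, algebraMap_gAut, hrel] at h
    exact h
  have hI0f : ((I₀ : Ideal (𝓞 L)) : FractionalIdeal (𝓞 L)⁰ L) ≠ 0 := coeIdeal_ne_zero.mpr hI₀
  have hIf : ((I : Ideal (𝓞 L)) : FractionalIdeal (𝓞 L)⁰ L) ≠ 0 := coeIdeal_ne_zero.mpr hI
  have key : spanSingleton (𝓞 L)⁰ (σ (algebraMap (𝓞 L) L x) * algebraMap (𝓞 L) L y)
      = spanSingleton (𝓞 L)⁰ (σ (algebraMap (𝓞 L) L y) * ((α : L) * algebraMap (𝓞 L) L x)) := by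
    apply mul_right_cancel₀ (mul_ne_zero hI0f hIf)
    calc spanSingleton (𝓞 L)⁰ (σ (algebraMap (𝓞 L) L x) * algebraMap (𝓞 L) L y) *
          ((I₀ : FractionalIdeal (𝓞 L)⁰ L) * (I : FractionalIdeal (𝓞 L)⁰ L))
        = (spanSingleton (𝓞 L)⁰ (σ (algebraMap (𝓞 L) L x)) * (I₀ : FractionalIdeal (𝓞 L)⁰ L)) *
          (spanSingleton (𝓞 L)⁰ (algebraMap (𝓞 L) L y) * (I : FractionalIdeal (𝓞 L)⁰ L)) := by
          rw [← spanSingleton_mul_spanSingleton]; ring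
      _ = (spanSingleton (𝓞 L)⁰ (σ (algebraMap (𝓞 L) L y)) *
            (spanSingleton (𝓞 L)⁰ (α : L) * (I : FractionalIdeal (𝓞 L)⁰ L))) *
          (spanSingleton (𝓞 L)⁰ (algebraMap (𝓞 L) L x) * (I₀ : FractionalIdeal (𝓞 L)⁰ L)) := by
          rw [F2, ← F1]
      _ = spanSingleton (𝓞 L)⁰ (σ (algebraMap (𝓞 L) L y) * ((α : L) * algebraMap (𝓞 L) L x)) *
          ((I₀ : FractionalIdeal (𝓞 L)⁰ L) * (I : FractionalIdeal (𝓞 L)⁰ L)) := by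
          rw [← spanSingleton_mul_spanSingleton, ← spanSingleton_mul_spanSingleton]; ring
  obtain ⟨z, hz⟩ := (spanSingleton_eq_spanSingleton (R := 𝓞 L)).mp key
  have hzL : algebraMap (𝓞 L) L (z : 𝓞 L) * (σ (algebraMap (𝓞 L) L x) * algebraMap (𝓞 L) L y)
      = σ (algebraMap (𝓞 L) L y) * ((α : L) * algebraMap (𝓞 L) L x) := by
    rw [← hz, Units.smul_def, Algebra.smul_def]
  have hNx : Algebra.norm k (algebraMap (𝓞 L) L x) ≠ 0 :=
    Algebra.norm_ne_zero_iff.mpr (algL_ne_zero hx)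
  have hNy : Algebra.norm k (algebraMap (𝓞 L) L y) ≠ 0 :=
    Algebra.norm_ne_zero_iff.mpr (algL_ne_zero hy)
  have hnorm := congrArg (Algebra.norm k) hzL
  rw [_root_.map_mul, _root_.map_mul, _root_.map_mul, _root_.map_mul, Algebra.norm_eq_of_algEquiv σ,
    Algebra.norm_eq_of_algEquiv σ] at hnorm
  refine ⟨z, ?_⟩
  have h2 : Algebra.norm k (algebraMap (𝓞 L) L (z : 𝓞 L)) *
      (Algebra.norm k (algebraMap (𝓞 L) L x) * Algebra.norm k (algebraMap (𝓞 L) L y))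
      = Algebra.norm k (α : L) *
      (Algebra.norm k (algebraMap (𝓞 L) L x) * Algebra.norm k (algebraMap (𝓞 L) L y)) := by
    rw [hnorm]; ring
  exact mul_right_cancel₀ (mul_ne_zero hNx hNy) h2

/-- Classical Hilbert 90. -/
lemma hilbert90_classical (hp : p.Prime) (hdeg : Module.finrank k L = p)
    (σ : L ≃ₐ[k] L) (hgen : ∀ g : L ≃ₐ[k] L, g ∈ Subgroup.zpowers σ)
    (η : Lˣ) (hη : Algebra.norm k (η : L) = 1) :
    ∃ β : Lˣ, (η : L) = σ (β : L) / (β : L) := by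
  classical
  have horder := orderOf_sigma k hp hdeg σ hgen
  set F : ℕ → Lˣ := fun n => ∏ j ∈ Finset.range n, (σ ^ j) • η with hF
  have hFval : ∀ n, ((F n : Lˣ) : L) = ∏ j ∈ Finset.range n, (σ ^ j) (η : L) := by
    intro n
    calc ((F n : Lˣ) : L)
        = ∏ j ∈ Finset.range n, (((σ ^ j) • η : Lˣ) : L) :=
          _root_.map_prod (Units.coeHom L) _ _
      _ = ∏ j ∈ Finset.range n, (σ ^ j) (η : L) :=
          Finset.prod_congr rfl fun j _ => by rw [AlgEquiv.smul_units_def]; rfl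
  have hFp : F p = 1 := by
    apply Units.ext
    rw [hFval p, ← norm_eq_prod_pow k hp hdeg σ hgen (η : L), hη, _root_.map_one, Units.val_one]
  have hFadd : ∀ m n, F (m + n) = F m * (σ ^ m) • F n := by
    intro m n
    rw [hF]
    show ∏ j ∈ Finset.range (m + n), (σ ^ j) • η = _
    rw [Finset.prod_range_add]
    congr 1
    have hdist : (σ ^ m) • (∏ j ∈ Finset.range n, (σ ^ j) • η)
        = ∏ j ∈ Finset.range n, (σ ^ m) • ((σ ^ j) • η) :=
      _root_.map_prod (MulDistribMulAction.toMonoidHom Lˣ (σ ^ m)) _ _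
    rw [hdist]
    exact Finset.prod_congr rfl fun j _ => by rw [← mul_smul, ← pow_add]
  have hFmul : ∀ (q r : ℕ), F (r + p * q) = F r := by
    intro q
    induction q with
    | zero => intro r; simp
    | succ q ih =>
        intro r
        have : r + p * (q + 1) = (r + p * q) + p := by ring
        rw [this, hFadd, hFp, smul_one, mul_one, ih]
  have hFmod : ∀ n, F n = F (n % p) := by
    intro n
    conv_lhs => rw [← Nat.mod_add_div n p]
    exact hFmul (n / p) (n % p)
  have hFcong : ∀ m n, σ ^ m = σ ^ n → F m = F n := by
    intro m n h
    have hmn := pow_eq_pow_iff_modEq.mp h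
    rw [horder] at hmn
    rw [hFmod m, hFmod n]
    exact congrArg F hmn
  have hpow := exists_pow_eq k hp hdeg σ hgen
  set nd : (L ≃ₐ[k] L) → ℕ := fun g => (hpow g).choose with hnd
  have hnd_spec : ∀ g, σ ^ (nd g) = g := fun g => (hpow g).choose_spec.2
  set f : (L ≃ₐ[k] L) → Lˣ := fun g => F (nd g) with hf
  have hcoc : groupCohomology.IsMulCocycle₁ f := by
    intro g h
    show F (nd (g * h)) = g • F (nd h) * F (nd g)
    have h1 : σ ^ (nd (g * h)) = σ ^ (nd g + nd h) := by
      rw [pow_add, hnd_spec, hnd_spec, hnd_spec]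
    rw [hFcong _ _ h1, hFadd, hnd_spec]
    exact mul_comm _ _
  obtain ⟨β, hβ⟩ := groupCohomology.isMulCoboundary₁_of_isMulCocycle₁_of_aut_to_units f hcoc
  refine ⟨β, ?_⟩
  have hσβ := hβ σ
  have hfσ : f σ = η := by
    show F (nd σ) = η
    have h1 : σ ^ (nd σ) = σ ^ 1 := by rw [hnd_spec, pow_one]
    rw [hFcong _ _ h1]
    show ∏ j ∈ Finset.range 1, (σ ^ j) • η = η
    rw [Finset.prod_range_one, pow_zero, one_smul]
  rw [hfσ] at hσβ
  have hval : ((σ • β / β : Lˣ) : L) = σ (β : L) / (β : L) := by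
    rw [Units.val_div_eq_div_val, AlgEquiv.smul_units_def]
    rfl
  rw [← hσβ, hval]

/-- The engine: if the norm of `α` is the norm of a unit, produce a `σ`-invariant ideal in
the class of `I`. -/
lemma exists_invariant_ideal (hp : p.Prime) (hdeg : Module.finrank k L = p)
    (σ : L ≃ₐ[k] L) (hgen : ∀ g : L ≃ₐ[k] L, g ∈ Subgroup.zpowers σ)
    {I : Ideal (𝓞 L)} (hI : I ≠ 0) {α : Lˣ}
    (hrel : (Ideal.map (gAut k σ) I : FractionalIdeal (𝓞 L)⁰ L) =
      spanSingleton (𝓞 L)⁰ (α : L) * (I : FractionalIdeal (𝓞 L)⁰ L))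
    {v : (𝓞 L)ˣ}
    (hNα : Algebra.norm k (algebraMap (𝓞 L) L (v : 𝓞 L)) = Algebra.norm k (α : L)) :
    ∃ c : 𝓞 L, c ≠ 0 ∧ Ideal.map (gAut k σ) (Ideal.span {c} * I) = Ideal.span {c} * I := by
  have hy0 : Algebra.norm k (α : L) ≠ 0 := Algebra.norm_ne_zero_iff.mpr (Units.ne_zero α)
  have hps : p - 1 + 1 = p := Nat.succ_pred_eq_of_pos hp.pos
  set u'v : L := algebraMap (𝓞 L) L (v : 𝓞 L) with hu'v
  have hvne : (v : 𝓞 L) ≠ 0 := Units.ne_zero v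
  have hu'ne : u'v ≠ 0 := algL_ne_zero hvne
  set η : Lˣ := α⁻¹ * (Units.map (algebraMap (𝓞 L) L).toMonoidHom v) with hη_def
  have hηval : (η : L) = (α : L)⁻¹ * u'v := by
    rw [hη_def, Units.val_mul, Units.val_inv_eq_inv_val]
    rfl
  have hnormα_inv : Algebra.norm k ((α : L)⁻¹) = (Algebra.norm k (α : L))⁻¹ := by
    have h1 : Algebra.norm k ((α : L)⁻¹) * Algebra.norm k (α : L) = 1 := by
      rw [← _root_.map_mul, inv_mul_cancel₀ (Units.ne_zero α), _root_.map_one]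
    exact eq_inv_of_mul_eq_one_left h1
  have hηnorm : Algebra.norm k (η : L) = 1 := by
    rw [hηval, _root_.map_mul, hnormα_inv, hNα, inv_mul_cancel₀ hy0]
  obtain ⟨β, hβ⟩ := hilbert90_classical k hp hdeg σ hgen η hηnorm
  have hβne : (β : L) ≠ 0 := Units.ne_zero β
  have hσβne : σ (β : L) ≠ 0 := fun h => hβne (by
    have := congrArg σ.symm h
    simpa using this)
  have hα_eq : (α : L) * σ (β : L) = u'v * (β : L) := by
    have h := hβ
    rw [hηval, eq_div_iff hβne] at h
    calc (α : L) * σ (β : L) = (α : L) * (((α : L)⁻¹ * u'v) * (β : L)) := by rw [h]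
      _ = ((α : L) * (α : L)⁻¹) * (u'v * (β : L)) := by ring
      _ = u'v * (β : L) := by rw [mul_inv_cancel₀ (Units.ne_zero α), one_mul]
  obtain ⟨bn, bd, hbn, hbd, habd⟩ := exists_int_rep β
  -- habd : β * bdL = bnL
  set c : 𝓞 L := bn * ∏ j ∈ Finset.range (p - 1), ((gAut k σ) ^ (j + 1)) bd with hc_def
  set bdL : L := algebraMap (𝓞 L) L bd with hbdL
  have hbdLne : bdL ≠ 0 := algL_ne_zero hbd
  set mLval : L := ∏ j ∈ Finset.range p, (σ ^ j) bdL with hmLval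
  have hmLne : mLval ≠ 0 := by
    rw [hmLval]
    refine Finset.prod_ne_zero_iff.mpr fun j _ => fun h => hbdLne ?_
    have := congrArg (σ ^ j).symm h
    exact (map_eq_zero_iff _ (EquivLike.injective (σ ^ j))).mp h
  have hsplit : mLval = (∏ j ∈ Finset.range (p - 1), (σ ^ (j + 1)) bdL) * bdL := by
    rw [hmLval]
    have h := Finset.prod_range_succ' (fun j => (σ ^ j) bdL) (p - 1)
    rw [hps] at h
    rw [h, pow_zero]
    rfl
  have hcL : algebraMap (𝓞 L) L c = (β : L) * mLval := by
    rw [hc_def, _root_.map_mul, _root_.map_prod]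
    have h1 : ∀ j ∈ Finset.range (p - 1), algebraMap (𝓞 L) L (((gAut k σ) ^ (j + 1)) bd)
        = (σ ^ (j + 1)) bdL := fun j _ => algebraMap_gAut_pow k σ (j + 1) bd
    rw [Finset.prod_congr rfl h1, hsplit, ← habd]
    ring
  have hσm : σ mLval = mLval := by
    rw [hmLval, _root_.map_prod]
    have h1 : ∀ j ∈ Finset.range p, σ ((σ ^ j) bdL) = (σ ^ (j + 1)) bdL := fun j _ => by
      rw [pow_succ']
      rfl
    rw [Finset.prod_congr rfl h1]
    have hp_term : (σ ^ p) bdL = (σ ^ 0) bdL := by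
      rw [sigma_pow_p k hp hdeg σ hgen, pow_zero]
    have h2 : ∏ j ∈ Finset.range (p - 1 + 1), (σ ^ (j + 1)) bdL
        = (∏ j ∈ Finset.range (p - 1), (σ ^ (j + 1)) bdL) * (σ ^ (p - 1 + 1)) bdL :=
      Finset.prod_range_succ _ _
    have h3 : ∏ j ∈ Finset.range (p - 1 + 1), (σ ^ j) bdL
        = (∏ j ∈ Finset.range (p - 1), (σ ^ (j + 1)) bdL) * (σ ^ 0) bdL :=
      Finset.prod_range_succ' _ _
    rw [hps] at h2 h3
    rw [h2, hp_term, ← h3]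
  have hcne : c ≠ 0 := by
    intro h
    have : algebraMap (𝓞 L) L c = 0 := by rw [h, _root_.map_zero]
    rw [hcL] at this
    exact (mul_ne_zero hβne hmLne) this
  have hfinal : σ (algebraMap (𝓞 L) L c) * (α : L) = u'v * algebraMap (𝓞 L) L c := by
    rw [hcL, _root_.map_mul, hσm]
    calc σ (β : L) * mLval * (α : L) = ((α : L) * σ (β : L)) * mLval := by ring
      _ = (u'v * (β : L)) * mLval := by rw [hα_eq]
      _ = u'v * ((β : L) * mLval) := by ring
  refine ⟨c, hcne, ?_⟩
  apply coeIdeal_injective (K := L)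
  show ((Ideal.map (gAut k σ) (Ideal.span {c} * I) : Ideal (𝓞 L)) : FractionalIdeal (𝓞 L)⁰ L)
    = ((Ideal.span {c} * I : Ideal (𝓞 L)) : FractionalIdeal (𝓞 L)⁰ L)
  rw [Ideal.map_mul, Ideal.map_span, Set.image_singleton, coeIdeal_mul, coeIdeal_mul,
    coeIdeal_span_singleton, coeIdeal_span_singleton, hrel, algebraMap_gAut, ← mul_assoc,
    spanSingleton_mul_spanSingleton, hfinal, ← spanSingleton_mul_spanSingleton]
  have hone : spanSingleton (𝓞 L)⁰ u'v = 1 := by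
    rw [hu'v, ← coeIdeal_span_singleton, Ideal.span_singleton_eq_top.mpr v.isUnit, coeIdeal_top]
  rw [hone, one_mul]

end Engine


set_option maxHeartbeats 2000000

/-- The exact sequence `1 → Am_st → Am → (E_k ∩ N L^×)/N E_L → 1` for a cyclic extension
`L/k` of number fields of odd prime degree `p` with Galois group `⟨σ⟩`.  Here `Am` consists
of the ambiguous classes of the `p`-class group of `L` (classes of `p`-power order fixed by
`σ`), `Am_st` of the strongly ambiguous ones (represented by a `σ`-invariant ideal), and
`θ([𝔞]) = N_{L/k}(α) mod N E_L` whenever `𝔞^{σ-1} = (α)`.  The statement asserts: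
(1) for every ambiguous class `c`, every representing ideal `I` and every `α ∈ L^×` with
`σ(I) = (α)I`, the norm of `α` lies in `E_k ∩ N L^×`, and it lies in `N E_L` iff `c` is
strongly ambiguous (exactness at `Am`, i.e. `ker θ = Am_st`, together with well-definedness);
(2) every class of `(E_k ∩ N L^×)/N E_L` arises this way (surjectivity of `θ`);
(3) `Am/Am_st` is elementary abelian: `c^p` is strongly ambiguous for all ambiguous `c`. -/
theorem ambiguous_class_exact_sequence (p : ℕ) (hp : p.Prime) (hodd : Odd p)
    (k L : Type*) [Field k] [Field L] [NumberField k] [NumberField L]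
    [Algebra k L] [IsGalois k L] [FiniteDimensional k L]
    (hdeg : Module.finrank k L = p)
    (σ : L ≃ₐ[k] L) (hgen : ∀ g : L ≃ₐ[k] L, g ∈ Subgroup.zpowers σ) :
    let σR : 𝓞 L →+* 𝓞 L := (galRestrict (𝓞 k) k L (𝓞 L) σ).toRingEquiv.toRingHom
    let Ek : Subgroup kˣ := (Units.map (algebraMap (𝓞 k) k).toMonoidHom).range
    let Nfield : Lˣ →* kˣ := Units.map (Algebra.norm k : L →* k)
    let NLx : Subgroup kˣ := Nfield.range
    let NEL : Subgroup kˣ :=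
      (Nfield.comp (Units.map (algebraMap (𝓞 L) L).toMonoidHom)).range
    let Amb : ClassGroup (𝓞 L) → Prop := fun c =>
      (∃ n : ℕ, c ^ p ^ n = 1) ∧
      ∃ I : (Ideal (𝓞 L))⁰, ClassGroup.mk0 I = c ∧
        ∃ J : (Ideal (𝓞 L))⁰, (J : Ideal (𝓞 L)) = Ideal.map σR (I : Ideal (𝓞 L)) ∧
          ClassGroup.mk0 J = c
    let AmbSt : ClassGroup (𝓞 L) → Prop := fun c =>
      (∃ n : ℕ, c ^ p ^ n = 1) ∧
      ∃ I : (Ideal (𝓞 L))⁰, ClassGroup.mk0 I = c ∧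
        Ideal.map σR (I : Ideal (𝓞 L)) = (I : Ideal (𝓞 L))
    (∀ c : ClassGroup (𝓞 L), Amb c →
      ∀ I : (Ideal (𝓞 L))⁰, ClassGroup.mk0 I = c →
      ∀ α : Lˣ,
        (Ideal.map σR (I : Ideal (𝓞 L)) : FractionalIdeal (𝓞 L)⁰ L) =
          FractionalIdeal.spanSingleton (𝓞 L)⁰ (α : L) *
            ((I : Ideal (𝓞 L)) : FractionalIdeal (𝓞 L)⁰ L) →
        (Nfield α ∈ Ek ⊓ NLx ∧ (Nfield α ∈ NEL ↔ AmbSt c))) ∧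
    (∀ ε : kˣ, ε ∈ Ek ⊓ NLx →
      ∃ (c : ClassGroup (𝓞 L)) (I : (Ideal (𝓞 L))⁰) (α : Lˣ), Amb c ∧
        ClassGroup.mk0 I = c ∧
        (Ideal.map σR (I : Ideal (𝓞 L)) : FractionalIdeal (𝓞 L)⁰ L) =
          FractionalIdeal.spanSingleton (𝓞 L)⁰ (α : L) *
            ((I : Ideal (𝓞 L)) : FractionalIdeal (𝓞 L)⁰ L) ∧
        ε * (Nfield α)⁻¹ ∈ NEL) ∧
    (∀ c : ClassGroup (𝓞 L), Amb c → AmbSt (c ^ p)) := by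
  intro σR Ek Nfield NLx NEL Amb AmbSt
  have hσR : ∀ J : Ideal (𝓞 L), Ideal.map σR J = Ideal.map (gAut k σ) J := fun _ => rfl
  have hIne : ∀ I : (Ideal (𝓞 L))⁰, (I : Ideal (𝓞 L)) ≠ 0 :=
    fun I => mem_nonZeroDivisors_iff_ne_zero.mp I.2
  have hNval : ∀ α : Lˣ, ((Nfield α : kˣ) : k) = Algebra.norm k (α : L) := fun _ => rfl
  have hNELval : ∀ w : (𝓞 L)ˣ,
      (((Nfield.comp (Units.map (algebraMap (𝓞 L) L).toMonoidHom)) w : kˣ) : k)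
      = Algebra.norm k (algebraMap (𝓞 L) L (w : 𝓞 L)) := fun _ => rfl
  have hNELmem : ∀ x : kˣ, x ∈ NEL ↔
      ∃ w : (𝓞 L)ˣ, Algebra.norm k (algebraMap (𝓞 L) L (w : 𝓞 L)) = (x : k) := by
    intro x
    constructor
    · rintro ⟨w, hw⟩
      exact ⟨w, by rw [← hNELval w, hw]⟩
    · rintro ⟨w, hw⟩
      exact ⟨w, Units.ext (by rw [hNELval w, hw])⟩
  -- a small helper : classes of I and (span c) * I agree
  have hmk0_span : ∀ (c : 𝓞 L), c ≠ 0 → ∀ (I : (Ideal (𝓞 L))⁰)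
      (h : Ideal.span {c} * (I : Ideal (𝓞 L)) ∈ (Ideal (𝓞 L))⁰),
      ClassGroup.mk0 ⟨Ideal.span {c} * (I : Ideal (𝓞 L)), h⟩ = ClassGroup.mk0 I := by
    intro c hc I h
    apply ClassGroup.mk0_eq_mk0_iff.mpr
    refine ⟨1, c, one_ne_zero, hc, ?_⟩
    rw [Ideal.span_singleton_one, Ideal.top_mul]
  -- helper : from a fractional relation, mk0 (map σR I) = mk0 I
  have hmk0_rel : ∀ (I : (Ideal (𝓞 L))⁰) (α : Lˣ),
      (Ideal.map (gAut k σ) (I : Ideal (𝓞 L)) : FractionalIdeal (𝓞 L)⁰ L) =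
        FractionalIdeal.spanSingleton (𝓞 L)⁰ (α : L) *
          ((I : Ideal (𝓞 L)) : FractionalIdeal (𝓞 L)⁰ L) →
      ∀ (h : Ideal.map (gAut k σ) (I : Ideal (𝓞 L)) ∈ (Ideal (𝓞 L))⁰),
      ClassGroup.mk0 ⟨Ideal.map (gAut k σ) (I : Ideal (𝓞 L)), h⟩ = ClassGroup.mk0 I := by
    intro I α hrel h
    obtain ⟨a, b, ha, hb, hab⟩ := exists_int_rep α
    have h2 := rel_to_integral k σ hab hrel
    exact ClassGroup.mk0_eq_mk0_iff.mpr ⟨b, a, hb, ha, h2⟩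
  refine ⟨?_, ?_, ?_⟩
  · -- part (1)
    rintro c hAmb I hmkI α hrel
    obtain ⟨hord, -⟩ := hAmb
    have hrel' : (Ideal.map (gAut k σ) (I : Ideal (𝓞 L)) : FractionalIdeal (𝓞 L)⁰ L) =
        FractionalIdeal.spanSingleton (𝓞 L)⁰ (α : L) *
          ((I : Ideal (𝓞 L)) : FractionalIdeal (𝓞 L)⁰ L) := by
      rw [← hσR]; exact hrel
    obtain ⟨u, hu⟩ := norm_is_unit k hp hdeg σ hgen (hIne I) hrel'
    constructor
    · rw [Subgroup.mem_inf]
      constructor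
      · exact ⟨u, Units.ext (by rw [hNval]; exact hu)⟩
      · exact ⟨α, rfl⟩
    · constructor
      · -- ker θ ⊆ Am_st
        intro hNEL
        obtain ⟨w, hw⟩ := (hNELmem _).mp hNEL
        rw [hNval] at hw
        obtain ⟨c', hc'ne, hinv⟩ :=
          exists_invariant_ideal k hp hdeg σ hgen (hIne I) hrel' (v := w) hw
        have hmem : Ideal.span {c'} * (I : Ideal (𝓞 L)) ∈ (Ideal (𝓞 L))⁰ := by
          rw [mem_nonZeroDivisors_iff_ne_zero]
          refine mul_ne_zero ?_ (hIne I)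
          rw [ne_eq, Ideal.zero_eq_bot, Ideal.span_singleton_eq_bot]
          exact hc'ne
        refine ⟨hord, ⟨Ideal.span {c'} * (I : Ideal (𝓞 L)), hmem⟩, ?_, ?_⟩
        · rw [hmk0_span c' hc'ne I hmem, hmkI]
        · show Ideal.map σR (Ideal.span {c'} * (I : Ideal (𝓞 L))) = _
          rw [hσR]
          exact hinv
      · -- Am_st ⊆ ker θ
        rintro ⟨-, I₀, hmkI₀, hinv₀⟩
        have h0 : ClassGroup.mk0 I₀ = ClassGroup.mk0 I := by rw [hmkI₀, hmkI]
        obtain ⟨x, y, hx, hy, hxy⟩ := ClassGroup.mk0_eq_mk0_iff.mp h0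
        have hinv₀' : Ideal.map (gAut k σ) (I₀ : Ideal (𝓞 L)) = (I₀ : Ideal (𝓞 L)) := by
          rw [← hσR]; exact hinv₀
        obtain ⟨w, hw⟩ := norm_in_NEL_of_invariant k σ (hIne I) (hIne I₀) hrel'
          hinv₀' hx hy hxy
        exact (hNELmem _).mpr ⟨w, by rw [hNval]; exact hw⟩
  · -- part (2) : surjectivity
    rintro ε hε
    rw [Subgroup.mem_inf] at hε
    obtain ⟨⟨u₀, hu₀⟩, ⟨α₀, hα₀⟩⟩ := hε
    have hεval : algebraMap (𝓞 k) k u₀ = (ε : k) := congrArg Units.val hu₀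
    have hα₀val : Algebra.norm k ((α₀ : Lˣ) : L) = (ε : k) := by
      rw [← hNval α₀, hα₀]
    obtain ⟨a, b, ha, hb, hab⟩ := exists_int_rep α₀
    have hgp : (gAut k σ) ^ p = 1 := gAut_pow_p k hp hdeg σ hgen
    set w₀ : 𝓞 L := algebraMap (𝓞 k) (𝓞 L) u₀.val with hw₀
    have hw₀L : algebraMap (𝓞 L) L w₀ = algebraMap k L (ε : k) := by
      rw [hw₀, ← IsScalarTower.algebraMap_apply (𝓞 k) (𝓞 L) L,
        IsScalarTower.algebraMap_apply (𝓞 k) k L, hεval]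
    have hnorma : Algebra.norm k (algebraMap (𝓞 L) L a)
        = (ε : k) * Algebra.norm k (algebraMap (𝓞 L) L b) := by
      rw [← hab, _root_.map_mul, hα₀val]
    have hNg : (∏ j ∈ Finset.range p, ((gAut k σ) ^ j) a)
        = w₀ * (∏ j ∈ Finset.range p, ((gAut k σ) ^ j) b) := by
      apply IsFractionRing.injective (𝓞 L) L
      rw [_root_.map_mul, norm_prod_int k hp hdeg σ hgen, norm_prod_int k hp hdeg σ hgen,
        hw₀L, hnorma, _root_.map_mul]
    have hN : Ideal.span {∏ j ∈ Finset.range p, ((gAut k σ) ^ j) a}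
        = Ideal.span {∏ j ∈ Finset.range p, ((gAut k σ) ^ j) b} := by
      rw [hNg, ← Ideal.span_singleton_mul_span_singleton,
        Ideal.span_singleton_eq_top.mpr (u₀.isUnit.map (algebraMap (𝓞 k) (𝓞 L))),
        Ideal.top_mul]
    obtain ⟨I₁, hI₁ne, hIrel⟩ := ideal_h90 (K := L) hp (gAut k σ) hgp ha hb hN
    have hdivval : algebraMap (𝓞 L) L a / algebraMap (𝓞 L) L b = (α₀ : L) := by
      rw [div_eq_iff (algL_ne_zero hb), hab]
    rw [hdivval] at hIrel
    have hI₁mem : I₁ ∈ (Ideal (𝓞 L))⁰ := mem_nonZeroDivisors_iff_ne_zero.mpr hI₁ne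
    set Isub : (Ideal (𝓞 L))⁰ := ⟨I₁, hI₁mem⟩ with hIsub
    set cls : ClassGroup (𝓞 L) := ClassGroup.mk0 Isub with hcls
    set n₀ : ℕ := orderOf cls with hn₀def
    have hn₀ : n₀ ≠ 0 := (orderOf_pos cls).ne'
    set a' : ℕ := n₀.factorization p with ha'
    set m' : ℕ := n₀ / p ^ a' with hm'
    have hco : Nat.Coprime m' p := (Nat.coprime_ordCompl hp hn₀).symm
    obtain ⟨x, -, hx⟩ := Nat.exists_mul_mod_eq_one_of_coprime hco hp.one_lt
    set t : ℕ := m' * x with ht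
    have ht1 : t % p = 1 := hx
    have hct : cls ^ (t * p ^ a') = 1 := by
      apply orderOf_dvd_iff_pow_eq_one.mp
      rw [← hn₀def]
      have hfac : p ^ a' * m' = n₀ := Nat.ordProj_mul_ordCompl_eq_self n₀ p
      calc n₀ ∣ p ^ a' * t := by
            rw [← hfac]
            exact mul_dvd_mul_left _ (Dvd.intro x rfl)
        _ = t * p ^ a' := mul_comm _ _
    -- the data
    set I : (Ideal (𝓞 L))⁰ := Isub ^ t with hI
    set α : Lˣ := α₀ ^ t with hα
    have hIval : (I : Ideal (𝓞 L)) = I₁ ^ t := rfl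
    have hrelt : (Ideal.map (gAut k σ) (I : Ideal (𝓞 L)) : FractionalIdeal (𝓞 L)⁰ L) =
        FractionalIdeal.spanSingleton (𝓞 L)⁰ (α : L) *
          ((I : Ideal (𝓞 L)) : FractionalIdeal (𝓞 L)⁰ L) := by
      rw [hIval, Ideal.map_pow, FractionalIdeal.coeIdeal_pow, hIrel, mul_pow,
        FractionalIdeal.spanSingleton_pow, FractionalIdeal.coeIdeal_pow]
      rfl
    have hrelt' : (Ideal.map σR (I : Ideal (𝓞 L)) : FractionalIdeal (𝓞 L)⁰ L) =
        FractionalIdeal.spanSingleton (𝓞 L)⁰ (α : L) *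
          ((I : Ideal (𝓞 L)) : FractionalIdeal (𝓞 L)⁰ L) := by
      rw [hσR]; exact hrelt
    have hmapmem : Ideal.map (gAut k σ) (I : Ideal (𝓞 L)) ∈ (Ideal (𝓞 L))⁰ :=
      mem_nonZeroDivisors_iff_ne_zero.mpr (map_aut_ne_bot _ (hIne I))
    refine ⟨cls ^ t, I, α, ⟨⟨a', ?_⟩, I, ?_, ⟨⟨Ideal.map (gAut k σ) (I : Ideal (𝓞 L)), hmapmem⟩,
      ?_, ?_⟩⟩, ?_, hrelt', ?_⟩
    · rw [← pow_mul]
      exact hct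
    · rw [hI, map_pow, hcls]
    · show (Ideal.map (gAut k σ) (I : Ideal (𝓞 L)) : Ideal (𝓞 L)) = Ideal.map σR _
      rw [hσR]
    · rw [hmk0_rel I α hrelt hmapmem, hI, map_pow, hcls]
    · rw [hI, map_pow, hcls]
    · -- ε * (Nfield α)⁻¹ ∈ NEL
      have hNα : Nfield α = ε ^ t := by
        rw [hα, map_pow, hα₀]
      rw [hNα]
      set s : ℕ := t / p with hs
      have hts : p * s + 1 = t := by
        conv_rhs => rw [← Nat.div_add_mod t p]
        rw [ht1, hs]
      have hεp : ε ^ p ∈ NEL := by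
        refine ⟨Units.map (algebraMap (𝓞 k) (𝓞 L)).toMonoidHom u₀, ?_⟩
        apply Units.ext
        show Algebra.norm k (algebraMap (𝓞 L) L ((algebraMap (𝓞 k) (𝓞 L)) u₀.val))
          = ((ε ^ p : kˣ) : k)
        rw [Units.val_pow_eq_pow_val, ← IsScalarTower.algebraMap_apply (𝓞 k) (𝓞 L) L,
          IsScalarTower.algebraMap_apply (𝓞 k) k L, hεval, Algebra.norm_algebraMap, hdeg]
      have heq : ε * (ε ^ t)⁻¹ = ((ε ^ p) ^ s)⁻¹ := by
        rw [← hts, pow_succ, ← pow_mul, mul_inv_rev, ← mul_assoc, mul_inv_cancel, one_mul]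
      rw [heq]
      exact NEL.inv_mem (NEL.pow_mem hεp s)
  · -- part (3)
    rintro c hAmb
    obtain ⟨⟨n, hcn⟩, I, hmkI, J, hJeq, hmkJ⟩ := hAmb
    have h0 : ClassGroup.mk0 J = ClassGroup.mk0 I := by rw [hmkJ, hmkI]
    obtain ⟨x, y, hx, hy, hxy⟩ := ClassGroup.mk0_eq_mk0_iff.mp h0
    have hxyt : Ideal.span {x} * Ideal.map (gAut k σ) (I : Ideal (𝓞 L))
        = Ideal.span {y} * (I : Ideal (𝓞 L)) := by
      rw [← hσR, ← hJeq]
      exact hxy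
    have hxL : algebraMap (𝓞 L) L x ≠ 0 := algL_ne_zero hx
    have hyL : algebraMap (𝓞 L) L y ≠ 0 := algL_ne_zero hy
    set αv : L := algebraMap (𝓞 L) L y / algebraMap (𝓞 L) L x with hαv
    have hαvne : αv ≠ 0 := div_ne_zero hyL hxL
    set α : Lˣ := Units.mk0 αv hαvne with hαdef
    have hrel' : (Ideal.map (gAut k σ) (I : Ideal (𝓞 L)) : FractionalIdeal (𝓞 L)⁰ L) =
        FractionalIdeal.spanSingleton (𝓞 L)⁰ (α : L) *
          ((I : Ideal (𝓞 L)) : FractionalIdeal (𝓞 L)⁰ L) := by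
      have hfrac := congrArg (fun J : Ideal (𝓞 L) => (J : FractionalIdeal (𝓞 L)⁰ L)) hxyt
      simp only [FractionalIdeal.coeIdeal_mul, FractionalIdeal.coeIdeal_span_singleton] at hfrac
      have hxs : FractionalIdeal.spanSingleton (𝓞 L)⁰ (algebraMap (𝓞 L) L x) ≠ 0 := by
        rw [ne_eq, FractionalIdeal.spanSingleton_eq_zero_iff]
        exact hxL
      apply mul_left_cancel₀ hxs
      rw [hfrac, ← mul_assoc, FractionalIdeal.spanSingleton_mul_spanSingleton]
      show FractionalIdeal.spanSingleton (𝓞 L)⁰ (algebraMap (𝓞 L) L y) * _ = _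
      congr 1
      rw [hαdef]
      show _ = FractionalIdeal.spanSingleton (𝓞 L)⁰ (algebraMap (𝓞 L) L x * αv)
      rw [hαv, mul_div_cancel₀ _ hxL]
    obtain ⟨u, hu⟩ := norm_is_unit k hp hdeg σ hgen (hIne I) hrel'
    -- powered relation
    have hrelp : (Ideal.map (gAut k σ) ((I : Ideal (𝓞 L)) ^ p) : FractionalIdeal (𝓞 L)⁰ L) =
        FractionalIdeal.spanSingleton (𝓞 L)⁰ ((α ^ p : Lˣ) : L) *
          (((I : Ideal (𝓞 L)) ^ p : Ideal (𝓞 L)) : FractionalIdeal (𝓞 L)⁰ L) := by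
      rw [Ideal.map_pow, FractionalIdeal.coeIdeal_pow, hrel', mul_pow,
        FractionalIdeal.spanSingleton_pow, FractionalIdeal.coeIdeal_pow]
      rfl
    set w : (𝓞 L)ˣ := Units.map (algebraMap (𝓞 k) (𝓞 L)).toMonoidHom u with hwdef
    have hwval : Algebra.norm k (algebraMap (𝓞 L) L (w : 𝓞 L))
        = Algebra.norm k ((α ^ p : Lˣ) : L) := by
      have h1 : algebraMap (𝓞 L) L (w : 𝓞 L) = algebraMap k L (algebraMap (𝓞 k) k u) := by
        show algebraMap (𝓞 L) L (algebraMap (𝓞 k) (𝓞 L) u.val) = _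
        rw [← IsScalarTower.algebraMap_apply (𝓞 k) (𝓞 L) L,
          IsScalarTower.algebraMap_apply (𝓞 k) k L]
      rw [h1, Algebra.norm_algebraMap, hdeg, hu]
      show (Algebra.norm k ((α : Lˣ) : L)) ^ p = Algebra.norm k (((α : Lˣ) : L) ^ p)
      rw [map_pow]
    obtain ⟨c', hc'ne, hinv⟩ := exists_invariant_ideal k hp hdeg σ hgen
      (pow_ne_zero p (hIne I)) hrelp (v := w) hwval
    have hmem : Ideal.span {c'} * ((I : Ideal (𝓞 L)) ^ p) ∈ (Ideal (𝓞 L))⁰ := by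
      rw [mem_nonZeroDivisors_iff_ne_zero]
      refine mul_ne_zero ?_ (pow_ne_zero p (hIne I))
      rw [ne_eq, Ideal.zero_eq_bot, Ideal.span_singleton_eq_bot]
      exact hc'ne
    refine ⟨⟨n, ?_⟩, ⟨Ideal.span {c'} * ((I : Ideal (𝓞 L)) ^ p), hmem⟩, ?_, ?_⟩
    · rw [← pow_mul, mul_comm p (p ^ n), pow_mul, hcn, one_pow]
    · have h1 : ClassGroup.mk0 ⟨Ideal.span {c'} * ((I : Ideal (𝓞 L)) ^ p), hmem⟩
          = ClassGroup.mk0 (I ^ p) := by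
        apply ClassGroup.mk0_eq_mk0_iff.mpr
        refine ⟨1, c', one_ne_zero, hc'ne, ?_⟩
        rw [Ideal.span_singleton_one, Ideal.top_mul]
        rfl
      rw [h1, map_pow, hmkI]
    · show Ideal.map σR _ = _
      rw [hσR]
      exact hinv
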